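/- For every transmission tree N on a finite label set A there exists a rooted binary tree T with tips labelled bijectively by A and a tip-partition P of T such that z(P) = N. That is, the extended map Z from tip-partitions of all phylogenies on A to transmission trees on A is surjective. -/

import Mathlib

/-- A rooted binary phylogenetic tree on node set `V` with tips labelled bijectively
by the host set `A`.  `parent v = none` iff `v` is the root; `depth` witnesses
acyclicity; every tip is childless and every internal (non-tip) node has exactly
two children. -/
structure PhyloTree (V A : Type) where
  parent : V → Option V
  root : V
  depth : V → ℕ
  parent_root : parent root = none
  root_unique : ∀ v, parent v = none → v = root
  depth_lt : ∀ u v, parent u = some v → depth v < depth u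
  tip : A → V
  tip_inj : Function.Injective tip
  tip_no_child : ∀ (a : A) (u : V), parent u ≠ some (tip a)
  binary : ∀ v : V, (¬ ∃ a, tip a = v) → {u : V | parent u = some v}.ncard = 2

/-- `T.anc u v` : `u` is an ancestor of `v` in `T` (following parents from `v`
reaches `u`; reflexive). -/
def PhyloTree.anc {V A : Type} (T : PhyloTree V A) (u v : V) : Prop :=
  Relation.ReflTransGen (fun x y => T.parent x = some y) v u

/-- A tip-partition of `T`: each node gets a label `δ`, the block of a label is
its fiber, each block is a connected subtree (witnessed by its root `blockRoot`,
an ancestor of every node of the block such that every node on the tree path from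
it to a block member is in the block), and the block of label `a` contains the
tip labelled `a` (hence exactly one tip, by `δ_tip`). -/
structure TipPartition {V A : Type} (T : PhyloTree V A) where
  δ : V → A
  δ_tip : ∀ a, δ (T.tip a) = a
  blockRoot : A → V
  blockRoot_label : ∀ a, δ (blockRoot a) = a
  blockRoot_anc : ∀ u, T.anc (blockRoot (δ u)) u
  block_connected : ∀ u w, T.anc (blockRoot (δ u)) w → T.anc w u → δ w = δ u

/-- The transmission (infector) map `z(P)` induced by a tip-partition: the
infector of host `a` is the label of the block containing the parent of the root
of `a`'s block, or `none` if that root is the root of `T`. -/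
def infector {V A : Type} (T : PhyloTree V A) (P : TipPartition T) (a : A) : Option A :=
  (T.parent (P.blockRoot a)).map P.δ

/-- `f` is a transmission tree (a rooted labelled tree on `A`, viewed as an
infector map): there is a unique root (host with no infector), and iterating the
infector map from any host reaches the root (equivalently `none`). -/
def IsTransmissionTree {A : Type} (f : A → Option A) : Prop :=
  (∃! r, f r = none) ∧ ∀ a, ∃ k, (fun o => Option.bind o f)^[k] (some a) = none


namespace ZSurj
open scoped Classical

variable {A : Type} [Fintype A] (f : A → Option A)

noncomputable def ch (a : A) : Finset A := Finset.univ.filter (fun b => f b = some a)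

lemma mem_ch {a b : A} : b ∈ ch f a ↔ f b = some a := by simp [ch]

lemma ch_card_le (a : A) : (ch f a).card ≤ Fintype.card A := Finset.card_le_univ _

abbrev Vt : Type := {p : A × ℕ // p.2 ≤ (ch f p.1).card}

noncomputable def idx {a b : A} (h : b ∈ ch f a) : ℕ :=
  (((ch f a).equivFin ⟨b, h⟩ : Fin _) : ℕ)

lemma idx_lt {a b : A} (h : b ∈ ch f a) : idx f h < (ch f a).card :=
  Fin.is_lt _

noncomputable def par (v : Vt f) : Option (Vt f) :=
  if h0 : v.1.2 = 0 then
    if hc : (f v.1.1).isSome then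
      some ⟨((f v.1.1).get hc,
        idx f ((mem_ch f).mpr (Option.some_get hc).symm)),
        le_of_lt (idx_lt f _)⟩
    else none
  else some ⟨(v.1.1, v.1.2 - 1), le_trans (Nat.sub_le _ _) v.2⟩

lemma par_pos (v : Vt f) (h : v.1.2 ≠ 0) :
    par f v = some ⟨(v.1.1, v.1.2 - 1), le_trans (Nat.sub_le _ _) v.2⟩ := by
  simp [par, h]

lemma par_zero_none (v : Vt f) (h0 : v.1.2 = 0) (hn : f v.1.1 = none) :
    par f v = none := by
  simp [par, h0, hn]

lemma par_zero_some (v : Vt f) (h0 : v.1.2 = 0) {c : A} (hc : f v.1.1 = some c) :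
    par f v = some ⟨(c, idx f ((mem_ch f).mpr hc)), le_of_lt (idx_lt f _)⟩ := by
  have hs : (f v.1.1).isSome := by simp [hc]
  simp only [par, dif_pos h0, dif_pos hs]
  congr 1
  apply Subtype.ext
  have hg : (f v.1.1).get hs = c := by simp [hc]
  simp only [Prod.ext_iff]
  constructor
  · exact hg
  · -- idx with different membership proofs / different a
    subst hg
    rfl


lemma par_cases {u v : Vt f} (h : par f u = some v) :
    (u.1.2 ≠ 0 ∧ v = ⟨(u.1.1, u.1.2 - 1), le_trans (Nat.sub_le _ _) u.2⟩) ∨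
    (∃ (_ : u.1.2 = 0) (c : A) (hc : f u.1.1 = some c),
       v = ⟨(c, idx f ((mem_ch f).mpr hc)), le_of_lt (idx_lt f _)⟩) := by
  by_cases h0 : u.1.2 = 0
  · by_cases hs : (f u.1.1).isSome
    · obtain ⟨c, hfc⟩ := Option.isSome_iff_exists.mp hs
      rw [par_zero_some f u h0 hfc] at h
      exact Or.inr ⟨h0, c, hfc, (Option.some_injective _ h).symm⟩
    · have hfc : f u.1.1 = none := Option.not_isSome_iff_eq_none.mp hs
      rw [par_zero_none f u h0 hfc] at h; exact absurd h (by simp)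
  · rw [par_pos f u h0] at h
    exact Or.inl ⟨h0, (Option.some_injective _ h).symm⟩

variable (hf2 : ∀ a, ∃ k, (fun o => Option.bind o f)^[k] (some a) = none)

noncomputable def hd (a : A) : ℕ := Nat.find (hf2 a)

lemma hd_lt {a b : A} (h : f b = some a) : hd f hf2 a < hd f hf2 b := by
  have hb : (fun o => Option.bind o f)^[hd f hf2 b] (some b) = none := Nat.find_spec (hf2 b)
  have hb0 : hd f hf2 b ≠ 0 := by
    intro h0; rw [h0, Function.iterate_zero_apply] at hb; exact absurd hb (by simp)
  obtain ⟨m, hm⟩ := Nat.exists_eq_succ_of_ne_zero hb0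
  rw [hm, Function.iterate_succ_apply] at hb
  have hb' : (fun o => Option.bind o f)^[m] (some a) = none := by
    simpa [h] using hb
  have : hd f hf2 a ≤ m := Nat.find_min' (hf2 a) hb'
  omega

noncomputable def dep (v : Vt f) : ℕ := hd f hf2 v.1.1 * (Fintype.card A + 1) + v.1.2

lemma dep_lt {u v : Vt f} (h : par f u = some v) : dep f hf2 v < dep f hf2 u := by
  rcases par_cases f h with ⟨h0, h1⟩ | ⟨h0, c, hfc, h1⟩ <;> subst h1
  · unfold dep; simp only; omega
  · have hlt := hd_lt f hf2 hfc
    have hix : idx f ((mem_ch f).mpr hfc) < Fintype.card A + 1 :=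
      lt_of_lt_of_le (idx_lt f _) (le_trans (ch_card_le f _) (Nat.le_succ _))
    unfold dep
    simp only
    rw [h0]
    have h2 : (hd f hf2 c + 1) * (Fintype.card A + 1) ≤ hd f hf2 u.1.1 * (Fintype.card A + 1) :=
      Nat.mul_le_mul_right _ hlt
    nlinarith

lemma par_host {u v : Vt f} (h : par f u = some v) :
    v.1.1 = u.1.1 ∨ hd f hf2 v.1.1 < hd f hf2 u.1.1 := by
  rcases par_cases f h with ⟨_, h1⟩ | ⟨_, c, hfc, h1⟩ <;> subst h1
  · exact Or.inl rfl
  · exact Or.inr (hd_lt f hf2 hfc)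

lemma anc_hd {u v : Vt f}
    (h : Relation.ReflTransGen (fun x y => par f x = some y) v u) :
    u.1.1 = v.1.1 ∨ hd f hf2 u.1.1 < hd f hf2 v.1.1 := by
  induction h with
  | refl => exact Or.inl rfl
  | tail _ hstep ih =>
      rcases par_host f hf2 hstep with h1 | h1
      · rcases ih with h2 | h2
        · exact Or.inl (h1.trans h2)
        · exact Or.inr (h1 ▸ h2)
      · rcases ih with h2 | h2
        · exact Or.inr (h2 ▸ h1)
        · exact Or.inr (lt_trans h1 h2)

lemma anc_chain (a : A) : ∀ k (h : k ≤ (ch f a).card),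
    Relation.ReflTransGen (fun x y => par f x = some y)
      (⟨(a, k), h⟩ : Vt f) ⟨(a, 0), Nat.zero_le _⟩ := by
  intro k
  induction k with
  | zero => intro h; exact Relation.ReflTransGen.refl
  | succ n ih =>
      intro h
      refine Relation.ReflTransGen.head ?_ (ih (by omega))
      rw [par_pos f ⟨(a, n+1), h⟩ (by simp)]
      rfl


noncomputable def tree (hf : IsTransmissionTree f) : PhyloTree (Vt f) A where
  parent := par f
  root := ⟨(hf.1.choose, 0), Nat.zero_le _⟩
  depth := dep f hf.2
  parent_root := par_zero_none f _ rfl hf.1.choose_spec.1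
  root_unique := by
    intro v hv
    by_cases h0 : v.1.2 = 0
    · by_cases hs : (f v.1.1).isSome
      · obtain ⟨c, hfc⟩ := Option.isSome_iff_exists.mp hs
        rw [par_zero_some f v h0 hfc] at hv
        exact absurd hv (by simp)
      · have hfc : f v.1.1 = none := Option.not_isSome_iff_eq_none.mp hs
        have h1 : v.1.1 = hf.1.choose := hf.1.choose_spec.2 _ hfc
        exact Subtype.ext (Prod.ext h1 h0)
    · rw [par_pos f v h0] at hv
      exact absurd hv (by simp)
  depth_lt := fun u v h => dep_lt f hf.2 h
  tip a := ⟨(a, (ch f a).card), le_refl _⟩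
  tip_inj := by
    intro a b h
    exact congrArg (fun x : Vt f => x.1.1) h
  tip_no_child := by
    intro a u h
    rcases par_cases f h with ⟨h0, h1⟩ | ⟨h0, c, hfc, h1⟩
    · have e1 : a = u.1.1 := congrArg (fun x : Vt f => x.1.1) h1
      have e2 : (ch f a).card = u.1.2 - 1 := congrArg (fun x : Vt f => x.1.2) h1
      have := u.2
      rw [← e1] at this
      omega
    · have e1 : a = c := congrArg (fun x : Vt f => x.1.1) h1
      have e2 : (ch f a).card = idx f ((mem_ch f).mpr hfc) :=
        congrArg (fun x : Vt f => x.1.2) h1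
      subst e1
      exact absurd (idx_lt f ((mem_ch f).mpr hfc)) (by omega)
  binary := by
    intro v hnt
    obtain ⟨⟨a, k⟩, hle⟩ := v
    simp only at hnt hle
    have hk : k < (ch f a).card := by
      rcases lt_or_eq_of_le hle with h | h
      · exact h
      · exact absurd ⟨a, Subtype.ext (Prod.ext rfl h.symm)⟩ hnt
    set b : A := ((ch f a).equivFin.symm ⟨k, hk⟩ : ↥(ch f a)).1 with hb
    have hbmem : b ∈ ch f a := ((ch f a).equivFin.symm ⟨k, hk⟩).2
    have hfb : f b = some a := (mem_ch f).mp hbmem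
    have hidx : idx f hbmem = k := by
      have h1 : (⟨b, hbmem⟩ : ↥(ch f a)) = (ch f a).equivFin.symm ⟨k, hk⟩ := rfl
      have h2 : (ch f a).equivFin ⟨b, hbmem⟩ = ⟨k, hk⟩ := by
        rw [h1]; exact Equiv.apply_symm_apply _ _
      simpa [idx] using congrArg Fin.val h2
    have hne : (⟨(a, k+1), hk⟩ : Vt f) ≠ ⟨(b, 0), Nat.zero_le _⟩ := by
      intro h
      exact absurd (congrArg (fun x : Vt f => x.1.2) h) (by simp)
    have hSet : {u : Vt f | par f u = some ⟨(a, k), hle⟩} =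
        {⟨(a, k+1), hk⟩, ⟨(b, 0), Nat.zero_le _⟩} := by
      ext u
      simp only [Set.mem_setOf_eq, Set.mem_insert_iff, Set.mem_singleton_iff]
      constructor
      · intro h
        rcases par_cases f h with ⟨h0, h1⟩ | ⟨h0, c, hfc, h1⟩
        · left
          have e1 : a = u.1.1 := congrArg (fun x : Vt f => x.1.1) h1
          have e2 : k = u.1.2 - 1 := congrArg (fun x : Vt f => x.1.2) h1
          have e3 : u.1.2 = k + 1 := by omega
          exact Subtype.ext (Prod.ext e1.symm e3)
        · right
          have e1 : a = c := congrArg (fun x : Vt f => x.1.1) h1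
          subst e1
          have e2 : k = idx f ((mem_ch f).mpr hfc) :=
            congrArg (fun x : Vt f => x.1.2) h1
          have e3 : (ch f a).equivFin ⟨u.1.1, (mem_ch f).mpr hfc⟩ = ⟨k, hk⟩ :=
            Fin.ext e2.symm
          have e4 : (⟨u.1.1, (mem_ch f).mpr hfc⟩ : ↥(ch f a)) =
              (ch f a).equivFin.symm ⟨k, hk⟩ := by
            rw [← e3]; exact (Equiv.symm_apply_apply _ _).symm
          have e5 : u.1.1 = b := congrArg Subtype.val e4
          exact Subtype.ext (Prod.ext e5 h0)
      · intro h
        rcases h with h | h <;> subst h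
        · rw [par_pos f _ (by simp)]
          rfl
        · rw [par_zero_some f _ rfl hfb]
          congr 1
          exact Subtype.ext (congrArg (Prod.mk a) hidx)
    rw [hSet, Set.ncard_pair hne]

noncomputable def part (hf : IsTransmissionTree f) : TipPartition (tree f hf) where
  δ v := v.1.1
  δ_tip a := rfl
  blockRoot a := ⟨(a, 0), Nat.zero_le _⟩
  blockRoot_label a := rfl
  blockRoot_anc u := anc_chain f u.1.1 u.1.2 u.2
  block_connected := by
    intro u w h1 h2
    have a1 := anc_hd f hf.2 h1
    have a2 := anc_hd f hf.2 h2
    simp only at a1 a2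
    rcases a2 with a2 | a2
    · exact a2
    · rcases a1 with a1 | a1
      · exact a1.symm
      · exact absurd (lt_trans a1 a2) (lt_irrefl _)

end ZSurj

/-- Surjectivity of the extended map `Z`: every transmission tree on a finite
label set `A` arises as `z(P)` for a tip-partition `P` of some rooted binary
phylogeny with tips labelled by `A`. -/
theorem Z_surjective {A : Type} [Fintype A] (f : A → Option A)
    (hf : IsTransmissionTree f) :
    ∃ (V : Type) (T : PhyloTree V A) (P : TipPartition T),
      infector T P = f := by
  classical
  obtain ⟨h1, h2⟩ := hf
  refine ⟨ZSurj.Vt f, ZSurj.tree f ⟨h1, h2⟩, ZSurj.part f ⟨h1, h2⟩, ?_⟩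
  funext a
  show (ZSurj.par f ⟨(a, 0), Nat.zero_le _⟩).map (fun v => v.1.1) = f a
  rcases hfa : f a with _ | c
  · rw [ZSurj.par_zero_none f _ rfl hfa]
    rfl
  · rw [ZSurj.par_zero_some f _ rfl hfa]
    rfl
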